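/- For every non-negative integer n, the following identities of rational numbers hold: ∑_{k=1}^{n} (−1)^{k−1}·F(k+2)²·F(2k+4)/(F(k+2)⁴ − 1) = 5/6 + ((−1)^{n−1}/2)·(F(2n+3)/(F(n+1)·F(n+2)) − F(2n+5)/(F(n+2)·F(n+3)) + F(2n+7)/(F(n+3)·F(n+4))), and ∑_{k=1}^{n} (−1)^{k−1}·L(k+2)²·F(2k+4)/(L(k+2)⁴ − 25) = 5/14 + ((−1)^{n−1}/2)·(F(2n+3)/(L(n+1)·L(n+2)) − F(2n+5)/(L(n+2)·L(n+3)) + F(2n+7)/(L(n+3)·L(n+4))). -/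

import Mathlib

lemma stepF (a b : ℚ) (h : (b^2 - a*b - a^2)^2 = 1) (ha : 1 ≤ a) (hb : 1 ≤ b) :
    (a+b)^2 * ((a+b)*(a+3*b)) / ((a+b)^4 - 1)
      = ((a^2+b^2) / (a*b)
          + ((a+2*b)^2 + (2*a+3*b)^2) / ((a+2*b)*(2*a+3*b))) / 2 := by
  have h1 : a ≠ 0 := by linarith
  have h2 : b ≠ 0 := by linarith
  have h3 : a + 2*b ≠ 0 := by linarith
  have h4 : 2*a + 3*b ≠ 0 := by linarith
  have h5 : (a+b)^4 - 1 ≠ 0 := by nlinarith [sq_nonneg (a+b), sq_nonneg (a+b-2)]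
  field_simp
  linear_combination (-6*b^4 - 20*a*b^3 - 24*a^2*b^2 - 12*a^3*b - 2*a^4) * h

lemma stepL (a b : ℚ) (h : (b^2 - a*b - a^2)^2 = 1) (ha : 1 ≤ a) (hb : 1 ≤ b)
    (hl : 1 ≤ 2*b - a) :
    (a+3*b)^2 * ((a+b)*(a+3*b)) / ((a+3*b)^4 - 25)
      = ((a^2+b^2) / ((2*b-a)*(2*a+b))
          + ((a+2*b)^2 + (2*a+3*b)^2) / ((3*a+4*b)*(4*a+7*b))) / 2 := by
  have h1 : 2*b - a ≠ 0 := by linarith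
  have h2 : 2*a + b ≠ 0 := by linarith
  have h3 : 3*a + 4*b ≠ 0 := by linarith
  have h4 : 4*a + 7*b ≠ 0 := by linarith
  have h6 : (4:ℚ) ≤ a + 3*b := by linarith
  have h5 : (a+3*b)^4 - 25 ≠ 0 := by nlinarith [pow_le_pow_left₀ (by norm_num : (0:ℚ) ≤ 4) h6 4]
  rw [div_add_div _ _ (mul_ne_zero h1 h2) (mul_ne_zero h3 h4), div_div,
    div_eq_div_iff h5 (mul_ne_zero (mul_ne_zero (mul_ne_zero h1 h2) (mul_ne_zero h3 h4)) two_ne_zero)]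
  linear_combination (-1350*b^4 - 2700*a*b^3 - 1800*a^2*b^2 - 500*a^3*b - 50*a^4) * h

lemma aux12 (F L : ℤ → ℤ) (hF1 : F 1 = 1) (hF2 : F 2 = 1) (hF3 : F 3 = 2) (hF4 : F 4 = 3)
    (hFr : ∀ m : ℤ, F (m+2) = F (m+1) + F m)
    (hL1 : L 1 = 1) (hL2 : L 2 = 3)
    (hLr : ∀ m : ℤ, L (m+2) = L (m+1) + L m) (n : ℕ) :
    F (2*(n:ℤ)+3) = F ((n:ℤ)+1)^2 + F ((n:ℤ)+2)^2 ∧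
    F (2*(n:ℤ)+4) = F ((n:ℤ)+2) * (2*F ((n:ℤ)+1) + F ((n:ℤ)+2)) ∧
    L ((n:ℤ)+1) = 2*F ((n:ℤ)+2) - F ((n:ℤ)+1) ∧
    L ((n:ℤ)+2) = 2*F ((n:ℤ)+1) + F ((n:ℤ)+2) ∧
    (F ((n:ℤ)+2)^2 - F ((n:ℤ)+1)*F ((n:ℤ)+2) - F ((n:ℤ)+1)^2)^2 = 1 ∧
    1 ≤ F ((n:ℤ)+1) ∧ 1 ≤ F ((n:ℤ)+2) ∧ 1 ≤ L ((n:ℤ)+1) := by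
  induction n with
  | zero =>
    norm_num [hF1, hF2, hF3, hF4, hL1, hL2]
  | succ n ih =>
    obtain ⟨d3, d4, la, lb, hc, hx, hy, hl1⟩ := ih
    have f3 : F ((n:ℤ)+3) = F ((n:ℤ)+2) + F ((n:ℤ)+1) := by
      have h := hFr ((n:ℤ)+1)
      rwa [show (n:ℤ)+1+2 = (n:ℤ)+3 by ring, show (n:ℤ)+1+1 = (n:ℤ)+2 by ring] at h
    have g5 : F (2*(n:ℤ)+5) = F (2*(n:ℤ)+4) + F (2*(n:ℤ)+3) := by
      have h := hFr (2*(n:ℤ)+3)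
      rwa [show 2*(n:ℤ)+3+2 = 2*(n:ℤ)+5 by ring, show 2*(n:ℤ)+3+1 = 2*(n:ℤ)+4 by ring] at h
    have g6 : F (2*(n:ℤ)+6) = F (2*(n:ℤ)+5) + F (2*(n:ℤ)+4) := by
      have h := hFr (2*(n:ℤ)+4)
      rwa [show 2*(n:ℤ)+4+2 = 2*(n:ℤ)+6 by ring, show 2*(n:ℤ)+4+1 = 2*(n:ℤ)+5 by ring] at h
    have l3 : L ((n:ℤ)+3) = L ((n:ℤ)+2) + L ((n:ℤ)+1) := by
      have h := hLr ((n:ℤ)+1)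
      rwa [show (n:ℤ)+1+2 = (n:ℤ)+3 by ring, show (n:ℤ)+1+1 = (n:ℤ)+2 by ring] at h
    push_cast
    rw [show 2*((n:ℤ)+1)+3 = 2*(n:ℤ)+5 by ring, show 2*((n:ℤ)+1)+4 = 2*(n:ℤ)+6 by ring,
      show (n:ℤ)+1+1 = (n:ℤ)+2 by ring, show (n:ℤ)+1+2 = (n:ℤ)+3 by ring]
    refine ⟨?_, ?_, ?_, ?_, ?_, hy, ?_, ?_⟩
    · rw [g5, d3, d4, f3]; ring
    · rw [g6, g5, d3, d4, f3]; ring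
    · rw [lb, f3]; ring
    · rw [l3, lb, la, f3]; ring
    · rw [f3]; linear_combination hc
    · rw [f3]; linarith
    · rw [lb]; linarith


theorem statement12 (F L : ℤ → ℤ)
    (hF0 : F 0 = 0) (hF1 : F 1 = 1) (hF : ∀ n : ℤ, F n = F (n - 1) + F (n - 2))
    (hL0 : L 0 = 2) (hL1 : L 1 = 1) (hL : ∀ n : ℤ, L n = L (n - 1) + L (n - 2))
    (n : ℕ) :
    (∑ k ∈ Finset.Icc 1 n,
        (-1 : ℚ) ^ ((k : ℤ) - 1) * (F ((k : ℤ) + 2) : ℚ) ^ 2 * (F (2 * (k : ℤ) + 4) : ℚ) /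
          ((F ((k : ℤ) + 2) : ℚ) ^ 4 - 1) =
      5 / 6 + ((-1 : ℚ) ^ ((n : ℤ) - 1) / 2) *
        ((F (2 * (n : ℤ) + 3) : ℚ) / ((F ((n : ℤ) + 1) : ℚ) * (F ((n : ℤ) + 2) : ℚ))
          - (F (2 * (n : ℤ) + 5) : ℚ) / ((F ((n : ℤ) + 2) : ℚ) * (F ((n : ℤ) + 3) : ℚ))
          + (F (2 * (n : ℤ) + 7) : ℚ) / ((F ((n : ℤ) + 3) : ℚ) * (F ((n : ℤ) + 4) : ℚ)))) ∧
    (∑ k ∈ Finset.Icc 1 n,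
        (-1 : ℚ) ^ ((k : ℤ) - 1) * (L ((k : ℤ) + 2) : ℚ) ^ 2 * (F (2 * (k : ℤ) + 4) : ℚ) /
          ((L ((k : ℤ) + 2) : ℚ) ^ 4 - 25) =
      5 / 14 + ((-1 : ℚ) ^ ((n : ℤ) - 1) / 2) *
        ((F (2 * (n : ℤ) + 3) : ℚ) / ((L ((n : ℤ) + 1) : ℚ) * (L ((n : ℤ) + 2) : ℚ))
          - (F (2 * (n : ℤ) + 5) : ℚ) / ((L ((n : ℤ) + 2) : ℚ) * (L ((n : ℤ) + 3) : ℚ))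
          + (F (2 * (n : ℤ) + 7) : ℚ) / ((L ((n : ℤ) + 3) : ℚ) * (L ((n : ℤ) + 4) : ℚ)))) := by
  -- forward recurrences
  have hFr : ∀ m : ℤ, F (m+2) = F (m+1) + F m := by
    intro m
    have h := hF (m+2)
    rwa [show m+2-1 = m+1 by ring, show m+2-2 = m by ring] at h
  have hLr : ∀ m : ℤ, L (m+2) = L (m+1) + L m := by
    intro m
    have h := hL (m+2)
    rwa [show m+2-1 = m+1 by ring, show m+2-2 = m by ring] at h
  -- small values
  have f2 : F 2 = 1 := by have h := hFr 0; norm_num [hF0, hF1] at h; exact h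
  have f3 : F 3 = 2 := by have h := hFr 1; norm_num [hF1, f2] at h; omega
  have f4 : F 4 = 3 := by have h := hFr 2; norm_num [f2, f3] at h; omega
  have f5 : F 5 = 5 := by have h := hFr 3; norm_num [f3, f4] at h; omega
  have f6 : F 6 = 8 := by have h := hFr 4; norm_num [f4, f5] at h; omega
  have f7 : F 7 = 13 := by have h := hFr 5; norm_num [f5, f6] at h; omega
  have l2 : L 2 = 3 := by have h := hLr 0; norm_num [hL0, hL1] at h; omega
  have l3 : L 3 = 4 := by have h := hLr 1; norm_num [hL1, l2] at h; omega
  have l4 : L 4 = 7 := by have h := hLr 2; norm_num [l2, l3] at h; omega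
  induction n with
  | zero =>
    constructor <;>
      norm_num [hF1, f2, f3, f4, f5, f7, hL1, l2, l3, l4]
  | succ n ih =>
    obtain ⟨ih1, ih2⟩ := ih
    obtain ⟨d3, d4, la, lb, hc, hx, hy, hl1⟩ :=
      aux12 F L hF1 f2 f3 f4 hFr hL1 l2 hLr n
    set m : ℤ := (n : ℤ) with hm
    -- integer recurrence steps
    have e3 : F (m+3) = F (m+2) + F (m+1) := by
      have h := hFr (m+1)
      rwa [show m+1+2 = m+3 by ring, show m+1+1 = m+2 by ring] at h
    have e4 : F (m+4) = F (m+3) + F (m+2) := by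
      have h := hFr (m+2)
      rwa [show m+2+2 = m+4 by ring, show m+2+1 = m+3 by ring] at h
    have e5 : F (m+5) = F (m+4) + F (m+3) := by
      have h := hFr (m+3)
      rwa [show m+3+2 = m+5 by ring, show m+3+1 = m+4 by ring] at h
    have g5 : F (2*m+5) = F (2*m+4) + F (2*m+3) := by
      have h := hFr (2*m+3)
      rwa [show 2*m+3+2 = 2*m+5 by ring, show 2*m+3+1 = 2*m+4 by ring] at h
    have g6 : F (2*m+6) = F (2*m+5) + F (2*m+4) := by
      have h := hFr (2*m+4)
      rwa [show 2*m+4+2 = 2*m+6 by ring, show 2*m+4+1 = 2*m+5 by ring] at h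
    have g7 : F (2*m+7) = F (2*m+6) + F (2*m+5) := by
      have h := hFr (2*m+5)
      rwa [show 2*m+5+2 = 2*m+7 by ring, show 2*m+5+1 = 2*m+6 by ring] at h
    have g8 : F (2*m+8) = F (2*m+7) + F (2*m+6) := by
      have h := hFr (2*m+6)
      rwa [show 2*m+6+2 = 2*m+8 by ring, show 2*m+6+1 = 2*m+7 by ring] at h
    have g9 : F (2*m+9) = F (2*m+8) + F (2*m+7) := by
      have h := hFr (2*m+7)
      rwa [show 2*m+7+2 = 2*m+9 by ring, show 2*m+7+1 = 2*m+8 by ring] at h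
    have k3 : L (m+3) = L (m+2) + L (m+1) := by
      have h := hLr (m+1)
      rwa [show m+1+2 = m+3 by ring, show m+1+1 = m+2 by ring] at h
    have k4 : L (m+4) = L (m+3) + L (m+2) := by
      have h := hLr (m+2)
      rwa [show m+2+2 = m+4 by ring, show m+2+1 = m+3 by ring] at h
    have k5 : L (m+5) = L (m+4) + L (m+3) := by
      have h := hLr (m+3)
      rwa [show m+3+2 = m+5 by ring, show m+3+1 = m+4 by ring] at h
    -- rational values in terms of A, B
    set A : ℚ := (F (m+1) : ℚ) with hA
    set B : ℚ := (F (m+2) : ℚ) with hB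
    have q3 : (F (m+3) : ℚ) = A + B := by rw [e3, hA, hB]; push_cast; ring
    have q4 : (F (m+4) : ℚ) = A + 2*B := by rw [e4, e3, hA, hB]; push_cast; ring
    have q5 : (F (m+5) : ℚ) = 2*A + 3*B := by rw [e5, e4, e3, hA, hB]; push_cast; ring
    have r3 : (F (2*m+3) : ℚ) = A^2 + B^2 := by rw [d3, hA, hB]; push_cast; ring
    have r4 : (F (2*m+4) : ℚ) = 2*A*B + B^2 := by rw [d4, hA, hB]; push_cast; ring
    have r5 : (F (2*m+5) : ℚ) = A^2 + 2*A*B + 2*B^2 := by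
      rw [g5, d4, d3, hA, hB]; push_cast; ring
    have r6 : (F (2*m+6) : ℚ) = A^2 + 4*A*B + 3*B^2 := by
      rw [g6, g5, d4, d3, hA, hB]; push_cast; ring
    have r7 : (F (2*m+7) : ℚ) = 2*A^2 + 6*A*B + 5*B^2 := by
      rw [g7, g6, g5, d4, d3, hA, hB]; push_cast; ring
    have r9 : (F (2*m+9) : ℚ) = 5*A^2 + 16*A*B + 13*B^2 := by
      rw [g9, g8, g7, g6, g5, d4, d3, hA, hB]; push_cast; ring
    have p1 : (L (m+1) : ℚ) = 2*B - A := by rw [la, hA, hB]; push_cast; ring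
    have p2 : (L (m+2) : ℚ) = 2*A + B := by rw [lb, hA, hB]; push_cast; ring
    have p3 : (L (m+3) : ℚ) = A + 3*B := by rw [k3, lb, la, hA, hB]; push_cast; ring
    have p4 : (L (m+4) : ℚ) = 3*A + 4*B := by rw [k4, k3, lb, la, hA, hB]; push_cast; ring
    have p5 : (L (m+5) : ℚ) = 4*A + 7*B := by rw [k5, k4, k3, lb, la, hA, hB]; push_cast; ring
    have qc : (B^2 - A*B - A^2)^2 = 1 := by
      rw [hA, hB]; exact_mod_cast hc
    have qx : (1:ℚ) ≤ A := by rw [hA]; exact_mod_cast hx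
    have qy : (1:ℚ) ≤ B := by rw [hB]; exact_mod_cast hy
    have ql : (1:ℚ) ≤ 2*B - A := by rw [← p1]; exact_mod_cast hl1
    have hsgn : (-1:ℚ)^(m) = -(-1:ℚ)^(m-1) := by
      rw [sub_eq_add_neg, zpow_add₀ (by norm_num : (-1:ℚ) ≠ 0), zpow_neg, zpow_one]
      ring
    constructor
    · rw [Finset.sum_Icc_succ_top (Nat.le_add_left 1 n), ih1]
      push_cast
      rw [show 2*(m+1)+3 = 2*m+5 by ring, show 2*(m+1)+5 = 2*m+7 by ring,
        show 2*(m+1)+7 = 2*m+9 by ring, show 2*(m+1)+4 = 2*m+6 by ring,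
        show m+1+1 = m+2 by ring, show m+1+2 = m+3 by ring,
        show m+1+3 = m+4 by ring, show m+1+4 = m+5 by ring,
        show m+1-1 = m by ring]
      rw [hsgn, q3, q4, q5, r3, r5, r6, r7, r9]
      linear_combination (-(-1:ℚ)^(m-1)) * stepF A B qc qx qy
    · rw [Finset.sum_Icc_succ_top (Nat.le_add_left 1 n), ih2]
      push_cast
      rw [show 2*(m+1)+3 = 2*m+5 by ring, show 2*(m+1)+5 = 2*m+7 by ring,
        show 2*(m+1)+7 = 2*m+9 by ring, show 2*(m+1)+4 = 2*m+6 by ring,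
        show m+1+1 = m+2 by ring, show m+1+2 = m+3 by ring,
        show m+1+3 = m+4 by ring, show m+1+4 = m+5 by ring,
        show m+1-1 = m by ring]
      rw [hsgn, p1, p2, p3, p4, p5, r3, r5, r6, r7, r9]
      linear_combination (-(-1:ℚ)^(m-1)) * stepL A B qc qx qy ql
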